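/- Let F be a supertropical semifield and A a nonsingular n×n matrix over F. Set Ā := I_A A. Then Ā A^∇ I_A = I_A and I_A Ā = Ā. -/

import Mathlib

/-- A supertropical semifield (with an adjoined zero element), following
Izhakian–Knebusch–Rowen: a commutative semiring `F` together with an idempotent
additive and multiplicative ghost map `ν : F → F` whose fixed points are the
ghost elements (together with `0`), such that `a + b = ν a` when `ν a = ν b`
and `a + b ∈ {a, b}` otherwise, the tangible elements `T = F ∖ (G ∪ {0})`
form a multiplicative group, and `ν` maps `T` onto the nonzero ghosts. -/
class SupertropicalSemifield (F : Type*) extends CommSemiring F where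
  nu : F → F
  nu_zero : nu 0 = 0
  nu_idem : ∀ a, nu (nu a) = nu a
  nu_add : ∀ a b, nu (a + b) = nu a + nu b
  nu_mul : ∀ a b, nu (a * b) = nu a * nu b
  add_eq_nu : ∀ a b, nu a = nu b → a + b = nu a
  add_cases : ∀ a b, nu a ≠ nu b → a + b = a ∨ a + b = b
  tangible_inv : ∀ a, nu a ≠ a → ∃ b, nu b ≠ b ∧ a * b = 1
  nu_onto : ∀ g, nu g = g → g ≠ 0 → ∃ t, nu t ≠ t ∧ nu t = g

namespace Supertropical

open SupertropicalSemifield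

variable (F : Type*) [SupertropicalSemifield F]

/-- `a` is ghost or zero (i.e. `a ∈ G ∪ {0}`, the fixed points of `ν`). -/
def Ghost0 (a : F) : Prop := nu a = a

/-- `a` is tangible: `a ∈ T = F ∖ (G ∪ {0})`. -/
def Tangible (a : F) : Prop := nu a ≠ a

/-- The ghost-surpassing relation on `F`:  `b ⊨_gs a` iff `b = a + c` with `c` ghost or zero. -/
def GS (b a : F) : Prop := ∃ c, Ghost0 F c ∧ b = a + c

/-- `a ≥_ν b`. -/
def nuGE (a b : F) : Prop := nu a + nu b = nu a

/-- `a >_ν b`. -/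
def nuGT (a b : F) : Prop := nuGE F a b ∧ nu a ≠ nu b

/-- `a ≅_ν b` (`ν`-matched). -/
def nuEq (a b : F) : Prop := nu a = nu b

section VS

variable {V : Type*} [AddCommMonoid V] [Module F V]

/-- `v` lies in the ghost submodule `H₀ = eV`, `e = 1 + 1`. -/
def GhostV (v : V) : Prop := ∃ u : V, v = ((1 : F) + 1) • u

/-- The ghost-surpassing relation on a supertropical vector space:
`v ⊨_gs w` iff `v = w + h` with `h ∈ H₀`. -/
def GSV (v w : V) : Prop := ∃ h : V, GhostV F h ∧ v = w + h

variable {W : Type*} [AddCommMonoid W] [Module F W]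

/-- A supertropical map `φ : V → W`: `φ(v + w) ⊨_gs φ(v) + φ(w)` and
`φ(a • v) = a • φ(v)` for tangible `a`. -/
def STMap (φ : V → W) : Prop :=
  (∀ v w : V, GSV F (φ (v + w)) (φ v + φ w)) ∧
    ∀ a : F, Tangible F a → ∀ v : V, φ (a • v) = a • φ v

/-- A family of vectors is tropically independent if no linear combination with
tangible coefficients, not all zero, lies in the ghost submodule. -/
def TropIndep {m : ℕ} (v : Fin m → V) : Prop :=
  ∀ β : Fin m → F, (∀ i, Tangible F (β i) ∨ β i = 0) → (∃ i, β i ≠ 0) →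
    ¬ GhostV F (∑ i, β i • v i)

/-- `S ⊆ V` has rank `r`: it contains `r` tropically independent vectors, and no
tropically independent family in `S` has more than `r` members. -/
def HasRank (S : Set V) (r : ℕ) : Prop :=
  (∃ v : Fin r → V, (∀ i, v i ∈ S) ∧ TropIndep F v) ∧
    ∀ (m : ℕ) (v : Fin m → V), (∀ i, v i ∈ S) → TropIndep F v → m ≤ r

/-- A supertropical bilinear form: a supertropical map in each variable. -/
def IsBilinear (B : V → V → F) : Prop :=
  (∀ w : V, STMap F (fun v => B v w)) ∧ ∀ v : V, STMap F (fun w => B v w)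

/-- `B` is supertropically symmetric: `⟨v,w⟩ + ⟨w,v⟩` is ghost (or zero) for all `v, w`. -/
def SupSymmetric (B : V → V → F) : Prop := ∀ v w : V, Ghost0 F (B v w + B w v)

/-- A strict bilinear form. -/
def IsStrict (B : V → V → F) : Prop :=
  ∀ (a₁ a₂ b₁ b₂ : F) (v₁ v₂ w₁ w₂ : V),
    B (a₁ • v₁ + a₂ • v₂) (b₁ • w₁ + b₂ • w₂) =
      a₁ * b₁ * B v₁ w₁ + a₁ * b₂ * B v₁ w₂ + a₂ * b₁ * B v₂ w₁ + a₂ * b₂ * B v₂ w₂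

/-- `v` and `w` are compatible: `⟨v,v⟩ + ⟨w,w⟩ ≥_ν ⟨v,w⟩ + ⟨w,v⟩`. -/
def Compatible (B : V → V → F) (v w : V) : Prop :=
  nuGE F (B v v + B w w) (B v w + B w v)

/-- `v` and `w` are strictly compatible. -/
def StrictlyCompatible (B : V → V → F) (v w : V) : Prop :=
  Compatible F B v w ∧
    (nuEq F (B v v) (B w w) ∨ nuGT F (B v v + B w w) (B v w + B w v))

/-- The pair `{v, w}` is weakly Cauchy-Schwartz: `⟨v,v⟩⟨w,w⟩ ≥_ν ⟨v,w⟩² + ⟨w,v⟩²`. -/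
def WeakCS (B : V → V → F) (v w : V) : Prop :=
  nuGE F (B v v * B w w) (B v w ^ 2 + B w v ^ 2)

/-- The pair `{v, w}` is Cauchy-Schwartz: `⟨v,v⟩⟨w,w⟩ >_ν ⟨v,w⟩² + ⟨w,v⟩²`. -/
def CS (B : V → V → F) (v w : V) : Prop :=
  nuGT F (B v v * B w w) (B v w ^ 2 + B w v ^ 2)

end VS

/-- The permanent (supertropical determinant) of a square matrix. -/
def perm {n : ℕ} (A : Matrix (Fin n) (Fin n) F) : F :=
  ∑ σ : Equiv.Perm (Fin n), ∏ i, A i (σ i)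

/-- The supertropical adjoint matrix: the transpose of the matrix of cofactors. -/
def adjSup {n : ℕ} (A : Matrix (Fin (n + 1)) (Fin (n + 1)) F) :
    Matrix (Fin (n + 1)) (Fin (n + 1)) F :=
  Matrix.of fun i j => perm F (A.submatrix (Fin.succAbove j) (Fin.succAbove i))

end Supertropical


namespace Supertropical

open SupertropicalSemifield Finset

variable {F : Type*} [SupertropicalSemifield F]

/-! ### Basic supertropical arithmetic -/

lemma add_self' (a : F) : a + a = nu a := add_eq_nu a a rfl

lemma nu_add_self' (a : F) : nu a + nu a = nu a := by
  rw [← nu_add, add_self', nu_idem]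

lemma ghost_nu' (a : F) : Ghost0 F (nu a) := nu_idem a

lemma ghost_mul' (c : F) {g : F} (hg : Ghost0 F g) : Ghost0 F (c * g) := by
  have h1 : c * g = c * g + c * g := by
    conv_lhs => rw [show g = g + g by rw [add_self', hg]]
    rw [mul_add]
  rw [Ghost0, ← add_self', ← h1]

lemma nu_sum' {α : Type*} (s : Finset α) (f : α → F) :
    nu (∑ x ∈ s, f x) = ∑ x ∈ s, nu (f x) := by
  classical
  induction s using Finset.cons_induction with
  | empty => simpa using nu_zero
  | cons a s ha ih => rw [Finset.sum_cons, Finset.sum_cons, nu_add, ih]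

lemma ghost_sum' {α : Type*} {s : Finset α} {f : α → F}
    (h : ∀ x ∈ s, Ghost0 F (f x)) : Ghost0 F (∑ x ∈ s, f x) := by
  rw [Ghost0, nu_sum']
  exact Finset.sum_congr rfl h

lemma nu_one_mul' (x : F) : nu (1 : F) * nu x = nu x := by
  rw [← nu_mul, one_mul]

/-- `a ≤ν b`. -/
def leN (a b : F) : Prop := nu a + nu b = nu b

lemma leN_trans {a b c : F} (h1 : leN a b) (h2 : leN b c) : leN a c := by
  rw [leN] at *
  calc nu a + nu c = nu a + (nu b + nu c) := by rw [h2]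
    _ = (nu a + nu b) + nu c := by ring
    _ = nu b + nu c := by rw [h1]
    _ = nu c := h2

lemma leN_of_add (a b : F) : leN a (a + b) := by
  rw [leN, nu_add, ← add_assoc, nu_add_self']

lemma leN_sum_mem {α : Type*} {s : Finset α} (f : α → F) {x : α} (hx : x ∈ s) :
    leN (f x) (∑ y ∈ s, f y) := by
  classical
  rw [← Finset.add_sum_erase s f hx]
  exact leN_of_add _ _

lemma leN_mul {a b : F} (c : F) (h : leN a b) : leN (a * c) (b * c) := by
  rw [leN] at *
  rw [nu_mul, nu_mul, ← add_mul, h]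

lemma leN_mul_mul {x y a b : F} (h1 : leN x a) (h2 : leN y b) : leN (x * y) (a * b) := by
  refine leN_trans (leN_mul y h1) ?_
  rw [mul_comm a y, mul_comm a b]
  exact leN_mul a h2

lemma sum_leN {α : Type*} {s : Finset α} {f : α → F} {b : F}
    (h : ∀ x ∈ s, leN (f x) b) : leN (∑ x ∈ s, f x) b := by
  classical
  induction s using Finset.cons_induction with
  | empty => simp [leN, nu_zero]
  | cons x s hx ih =>
    rw [Finset.sum_cons, leN, nu_add, add_assoc, ih fun y hy => h y (Finset.mem_cons_of_mem hy)]
    exact h x (Finset.mem_cons_self x s)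

lemma ghost_add_eq {a b : F} (hg : Ghost0 F a) (h : leN b a) : a + b = a := by
  by_cases hν : nu a = nu b
  · rw [add_eq_nu a b hν, hg]
  · rcases add_cases a b hν with h' | h'
    · exact h'
    · exfalso
      apply hν
      have := congrArg nu h'
      rw [nu_add] at this
      rw [leN] at h
      rw [← h, add_comm, this]

lemma lt_add_eq {a b : F} (h : leN b a) (hne : nu a ≠ nu b) : a + b = a := by
  rcases add_cases a b hne with h' | h'
  · exact h'
  · exfalso
    apply hne
    have := congrArg nu h'
    rw [nu_add] at this
    rw [leN] at h
    rw [← h, add_comm, this]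

lemma absorb_sum {α : Type*} {s : Finset α} {a : F} {f : α → F}
    (h : ∀ x ∈ s, a + f x = a) : a + ∑ x ∈ s, f x = a := by
  classical
  induction s using Finset.cons_induction with
  | empty => simp
  | cons x s hx ih =>
    rw [Finset.sum_cons, ← add_assoc, h x (Finset.mem_cons_self x s)]
    exact ih fun y hy => h y (Finset.mem_cons_of_mem hy)

lemma sum_attain {α : Type*} {s : Finset α} {f : α → F}
    (hg : ∀ x ∈ s, Ghost0 F (f x)) (hs : s.Nonempty) : ∃ x ∈ s, ∑ y ∈ s, f y = f x := by
  classical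
  induction s using Finset.cons_induction with
  | empty => exact absurd hs (by simp)
  | cons x s hx ih =>
    rw [Finset.sum_cons]
    rcases s.eq_empty_or_nonempty with rfl | hs'
    · exact ⟨x, Finset.mem_cons_self x _, by simp⟩
    · obtain ⟨y, hy, hsum⟩ := ih (fun z hz => hg z (Finset.mem_cons_of_mem hz)) hs'
      rw [hsum]
      have hgx : Ghost0 F (f x) := hg x (Finset.mem_cons_self x s)
      by_cases hν : nu (f x) = nu (f y)
      · exact ⟨x, Finset.mem_cons_self x _, by rw [add_eq_nu _ _ hν, hgx]⟩
      · rcases add_cases (f x) (f y) hν with h' | h'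
        · exact ⟨x, Finset.mem_cons_self x _, h'⟩
        · exact ⟨y, Finset.mem_cons_of_mem hy, h'⟩

/-! ### Combinatorics of multisets of matrix positions -/

section Combinatorics

variable {α : Type*} [Fintype α] [DecidableEq α]

lemma count_map_univ {β : Type*} [DecidableEq β] (f : α → β) (b : β) :
    Multiset.count b (Finset.univ.val.map f) = (univ.filter fun x => f x = b).card := by
  rw [Multiset.count_map, Finset.card, Finset.filter_val]
  exact congrArg Multiset.card (Multiset.filter_congr fun x _ => eq_comm)

lemma exists_perm_comp {β : Type*} [DecidableEq β] (f g : α → β)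
    (hmap : Finset.univ.val.map f = Finset.univ.val.map g) :
    ∃ e : Equiv.Perm α, ∀ x, f (e x) = g x := by
  have hcard : ∀ b, Fintype.card {x // g x = b} = Fintype.card {x // f x = b} := by
    intro b
    rw [Fintype.card_subtype, Fintype.card_subtype, ← count_map_univ, ← count_map_univ, hmap]
  let fib : ∀ b, {x // g x = b} ≃ {x // f x = b} := fun b => Fintype.equivOfCardEq (hcard b)
  refine ⟨(Equiv.sigmaFiberEquiv g).symm.trans
    ((Equiv.sigmaCongrRight fib).trans (Equiv.sigmaFiberEquiv f)), fun x => ?_⟩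
  show f ((fib (g x) ⟨x, rfl⟩).val) = g x
  exact (fib (g x) ⟨x, rfl⟩).2

lemma map_upd_univ (a b : α) :
    Finset.univ.val.map (Function.update id b a) = a ::ₘ Finset.univ.val.erase b := by
  conv_lhs => rw [← Multiset.cons_erase (Finset.mem_univ b : b ∈ (Finset.univ : Finset α).val)]
  rw [Multiset.map_cons, Function.update_self]
  congr 1
  rw [show (Finset.univ.val.erase b).map (Function.update id b a)
      = (Finset.univ.val.erase b).map id from Multiset.map_congr rfl fun x hx => by
    have hxb : x ≠ b := by
      intro h; subst h
      exact (Finset.univ.nodup.notMem_erase) hx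
    simp [Function.update_of_ne hxb]]
  rw [Multiset.map_id]

lemma key_multiset (i j k : α) :
    Finset.univ.val.map (Function.update id k i) + Finset.univ.val.map (Function.update id j k)
      = Finset.univ.val + Finset.univ.val.map (Function.update id j i) := by
  rw [map_upd_univ, map_upd_univ, map_upd_univ]
  calc (i ::ₘ Finset.univ.val.erase k) + (k ::ₘ Finset.univ.val.erase j)
      = i ::ₘ (Finset.univ.val.erase k + (k ::ₘ Finset.univ.val.erase j)) :=
        Multiset.cons_add _ _ _
    _ = i ::ₘ (k ::ₘ (Finset.univ.val.erase k + Finset.univ.val.erase j)) := by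
        rw [Multiset.add_cons]
    _ = i ::ₘ ((k ::ₘ Finset.univ.val.erase k) + Finset.univ.val.erase j) := by
        rw [Multiset.cons_add]
    _ = i ::ₘ (Finset.univ.val + Finset.univ.val.erase j) := by
        rw [Multiset.cons_erase (Finset.mem_univ k : k ∈ (Finset.univ : Finset α).val)]
    _ = Finset.univ.val + (i ::ₘ Finset.univ.val.erase j) := (Multiset.add_cons _ _ _).symm

lemma pair_map_sum {β γ : Type*} (f1 f2 g1 g2 : γ → β) (s : Multiset γ)
    (hpair : ∀ c, ({f1 c, f2 c} : Multiset β) = {g1 c, g2 c}) :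
    s.map f1 + s.map f2 = s.map g1 + s.map g2 := by
  induction s using Multiset.induction_on with
  | empty => simp
  | cons a s ih =>
    have rearr : ∀ u v : γ → β,
        (a ::ₘ s).map u + (a ::ₘ s).map v = ({u a, v a} : Multiset β) + (s.map u + s.map v) := by
      intro u v
      rw [Multiset.map_cons, Multiset.map_cons, Multiset.cons_add, Multiset.add_cons,
        Multiset.insert_eq_cons, Multiset.cons_add, Multiset.singleton_add]
    rw [rearr f1 f2, rearr g1 g2, hpair a, ih]

lemma exists_decomp (φ1 φ2 h : α → α) (j : α)
    (htot : Finset.univ.val.map φ1 + Finset.univ.val.map φ2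
      = Finset.univ.val + Finset.univ.val.map h)
    (hh : ∀ r, r ≠ j → ∃ x, h x = r) :
    ∃ (ε : α ≃ α) (ψ2 : α → α),
      Finset.univ.val.map ψ2 = Finset.univ.val.map h ∧
      ∀ c, ({(ε c, c), (ψ2 c, c)} : Multiset (α × α)) = {(φ1 c, c), (φ2 c, c)} := by
  classical
  set t : α → Finset α := fun r => univ.filter fun c => φ1 c = r ∨ φ2 c = r with ht
  have hcount : ∀ r, Multiset.count r (Finset.univ.val.map φ1)
      + Multiset.count r (Finset.univ.val.map φ2)
      = 1 + Multiset.count r (Finset.univ.val.map h) := by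
    intro r
    have := congrArg (Multiset.count r) htot
    rwa [Multiset.count_add, Multiset.count_add, Multiset.count_univ] at this
  have hHall : ∀ R : Finset α, R.card ≤ (R.biUnion t).card := by
    intro R
    set N := R.biUnion t with hN
    have hsub : ∀ (φ : α → α), (∀ c r, φ c = r → c ∈ t r) →
        ∑ r ∈ R, (univ.filter fun c => φ c = r).card ≤ N.card := by
      intro φ hφ
      have hcardeq : (univ.filter fun c => φ c ∈ R).card
          = ∑ r ∈ R, (univ.filter fun c => φ c = r).card := by
        rw [Finset.card_eq_sum_card_fiberwise
          (s := univ.filter fun c => φ c ∈ R) (f := φ) (t := R) (fun x hx => (Finset.mem_filter.mp hx).2)]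
        refine Finset.sum_congr rfl fun r hr => ?_
        congr 1
        ext c
        simp only [Finset.mem_filter, Finset.mem_univ, true_and]
        exact ⟨fun ⟨_, h2⟩ => h2, fun h2 => ⟨h2 ▸ hr, h2⟩⟩
      rw [← hcardeq]
      apply Finset.card_le_card
      intro c hc
      have := (Finset.mem_filter.mp hc).2
      exact Finset.mem_biUnion.mpr ⟨φ c, this, hφ c (φ c) rfl⟩
    have hsum1 := hsub φ1 (fun c r hr => by
      simp only [ht, Finset.mem_filter]; exact ⟨Finset.mem_univ _, Or.inl hr⟩)
    have hsum2 := hsub φ2 (fun c r hr => by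
      simp only [ht, Finset.mem_filter]; exact ⟨Finset.mem_univ _, Or.inr hr⟩)
    have hlow : ∀ r ∈ R, (if r = j then 1 else 2)
        ≤ (univ.filter fun c => φ1 c = r).card + (univ.filter fun c => φ2 c = r).card := by
      intro r _
      rw [← count_map_univ, ← count_map_univ, hcount r]
      split_ifs with hrj
      · exact Nat.le_add_right _ _
      · obtain ⟨x, hx⟩ := hh r hrj
        have hmem : r ∈ Finset.univ.val.map h :=
          Multiset.mem_map.mpr ⟨x, Finset.mem_univ_val x, hx⟩
        have := Multiset.one_le_count_iff_mem.mpr hmem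
        omega
    have hup : ∑ r ∈ R, (if r = j then 1 else 2) ≤ N.card + N.card := by
      refine le_trans (Finset.sum_le_sum hlow) ?_
      rw [Finset.sum_add_distrib]
      exact Nat.add_le_add hsum1 hsum2
    have hji : (∑ r ∈ R, if r = j then (1 : ℕ) else 0) = if j ∈ R then 1 else 0 :=
      Finset.sum_ite_eq' R j (fun _ => 1)
    have hsplit : (∑ r ∈ R, if r = j then (1 : ℕ) else 2)
        + (∑ r ∈ R, if r = j then (1 : ℕ) else 0) = 2 * R.card := by
      rw [← Finset.sum_add_distrib]
      rw [Finset.sum_congr rfl (fun r _ => by split_ifs <;> rfl :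
        ∀ r ∈ R, ((if r = j then (1:ℕ) else 2) + (if r = j then 1 else 0)) = 2)]
      rw [Finset.sum_const, smul_eq_mul, mul_comm]
    have : (if j ∈ R then (1:ℕ) else 0) ≤ 1 := by split_ifs <;> omega
    omega
  obtain ⟨Mf, hMinj, hMmem⟩ := (Finset.all_card_le_biUnion_card_iff_existsInjective' t).mp hHall
  let ε0 : α ≃ α := Equiv.ofBijective Mf (Finite.injective_iff_bijective.mp hMinj)
  have hsel : ∀ c, φ1 c = ε0.symm c ∨ φ2 c = ε0.symm c := by
    intro c
    have h1 : Mf (ε0.symm c) = c := ε0.apply_symm_apply c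
    have h2 := hMmem (ε0.symm c)
    rw [h1] at h2
    exact (Finset.mem_filter.mp h2).2
  set ψ2 : α → α := fun c => if ε0.symm c = φ1 c then φ2 c else φ1 c with hψ2
  have hpair : ∀ c, ({(ε0.symm c, c), (ψ2 c, c)} : Multiset (α × α)) = {(φ1 c, c), (φ2 c, c)} := by
    intro c
    by_cases hc : ε0.symm c = φ1 c
    · simp only [hψ2, if_pos hc, hc]
    · have h2 : ε0.symm c = φ2 c := ((hsel c).resolve_left fun hx => hc hx.symm).symm
      simp only [hψ2, if_neg hc, h2]
      exact Multiset.pair_comm _ _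
  have hpair' : ∀ c, ({ε0.symm c, ψ2 c} : Multiset α) = {φ1 c, φ2 c} := by
    intro c
    by_cases hc : ε0.symm c = φ1 c
    · simp only [hψ2, if_pos hc, hc]
    · have h2 : ε0.symm c = φ2 c := ((hsel c).resolve_left fun hx => hc hx.symm).symm
      simp only [hψ2, if_neg hc, h2]
      exact Multiset.pair_comm _ _
  have hmaps : Finset.univ.val.map (fun c => ε0.symm c) + Finset.univ.val.map ψ2
      = Finset.univ.val.map φ1 + Finset.univ.val.map φ2 :=
    pair_map_sum _ _ _ _ _ hpair'
  rw [show (Finset.univ.val.map fun c => ε0.symm c) = Finset.univ.val from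
    Multiset.map_univ_val_equiv ε0.symm, htot] at hmaps
  exact ⟨ε0.symm, ψ2, add_left_cancel hmaps, hpair⟩

lemma key_pairs (i j k : α) (σ τ : Equiv.Perm α) :
    ∃ π ρ : Equiv.Perm α,
      (Finset.univ.val.map fun r => ((r : α), π r))
        + (Finset.univ.val.map fun r => (Function.update id j i r, ρ r))
      = (Finset.univ.val.map fun r => (Function.update id k i r, σ r))
        + (Finset.univ.val.map fun r => (Function.update id j k r, τ r)) := by
  classical
  set f := Function.update (id : α → α) k i with hf
  set g := Function.update (id : α → α) j k with hg
  set h := Function.update (id : α → α) j i with hh0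
  have htot : Finset.univ.val.map (fun c => f (σ.symm c)) + Finset.univ.val.map (fun c => g (τ.symm c))
      = Finset.univ.val + Finset.univ.val.map h := by
    have hcomp : ∀ (u : α → α) (e : Equiv.Perm α),
        Finset.univ.val.map (fun c => u (e c)) = Finset.univ.val.map u := by
      intro u e
      rw [show (fun c => u (e c)) = u ∘ ⇑e from rfl, ← Multiset.map_map,
        Multiset.map_univ_val_equiv]
    rw [hcomp f σ.symm, hcomp g τ.symm]
    exact key_multiset i j k
  have hh : ∀ r, r ≠ j → ∃ x, h x = r := fun r hr => ⟨r, by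
    simp [hh0, Function.update_of_ne hr]⟩
  obtain ⟨ε, ψ2, hmapψ2, hpair⟩ := exists_decomp _ _ h j htot hh
  obtain ⟨ρ, hρ⟩ := exists_perm_comp ψ2 h hmapψ2
  refine ⟨ε.symm, ρ, ?_⟩
  calc (Finset.univ.val.map fun r => ((r : α), ε.symm r))
        + (Finset.univ.val.map fun r => (h r, ρ r))
      = (Finset.univ.val.map fun c => (ε c, c)) + (Finset.univ.val.map fun c => (ψ2 c, c)) := by
        congr 1
        · conv_rhs => rw [← Multiset.map_univ_val_equiv ε.symm, Multiset.map_map]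
          refine Multiset.map_congr rfl fun r _ => ?_
          simp
        · conv_rhs => rw [← Multiset.map_univ_val_equiv ρ, Multiset.map_map]
          refine Multiset.map_congr rfl fun r _ => ?_
          simp [hρ r]
    _ = (Finset.univ.val.map fun c => (f (σ.symm c), c))
        + (Finset.univ.val.map fun c => (g (τ.symm c), c)) :=
        pair_map_sum _ _ _ _ _ hpair
    _ = (Finset.univ.val.map fun r => (f r, σ r)) + (Finset.univ.val.map fun r => (g r, τ r)) := by
        congr 1
        · conv_lhs => rw [← Multiset.map_univ_val_equiv σ, Multiset.map_map]
          exact Multiset.map_congr rfl fun r _ => by simp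
        · conv_lhs => rw [← Multiset.map_univ_val_equiv τ, Multiset.map_map]
          exact Multiset.map_congr rfl fun r _ => by simp

lemma count_graph (u : α → α) (w : Equiv.Perm α) (x y : α) :
    Multiset.count (x, y) (Finset.univ.val.map fun r => (u r, w r))
      = if u (w.symm y) = x then 1 else 0 := by
  classical
  rw [count_map_univ]
  have hset : (univ.filter fun r => (u r, w r) = (x, y))
      = if u (w.symm y) = x then {w.symm y} else (∅ : Finset α) := by
    split_ifs with hc
    · ext r
      simp only [Finset.mem_filter, Finset.mem_univ, true_and, Finset.mem_singleton,
        Prod.mk.injEq]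
      constructor
      · rintro ⟨h1, h2⟩
        exact ((Equiv.symm_apply_eq w).mpr h2.symm).symm
      · rintro rfl
        exact ⟨hc, w.apply_symm_apply y⟩
    · ext r
      simp only [Finset.mem_filter, Finset.mem_univ, true_and, Finset.notMem_empty,
        iff_false, Prod.mk.injEq, not_and]
      intro h1 h2
      apply hc
      rw [(Equiv.symm_apply_eq w).mpr h2.symm]
      exact h1
  rw [hset]
  split_ifs <;> simp

end Combinatorics

/-! ### Permanent expansion -/

/-- The permutation of `Fin (n+1)` sending `j ↦ k` and `j.succAbove t ↦ k.succAbove (τ t)`. -/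
def extPerm {n : ℕ} (j k : Fin (n + 1)) (τ : Equiv.Perm (Fin n)) : Equiv.Perm (Fin (n + 1)) :=
  (finSuccEquiv' j).trans ((Equiv.optionCongr τ).trans (finSuccEquiv' k).symm)

@[simp] lemma extPerm_at {n : ℕ} (j k : Fin (n + 1)) (τ : Equiv.Perm (Fin n)) :
    extPerm j k τ j = k := by
  simp [extPerm, finSuccEquiv'_at, finSuccEquiv'_symm_none]

@[simp] lemma extPerm_succAbove {n : ℕ} (j k : Fin (n + 1)) (τ : Equiv.Perm (Fin n)) (t : Fin n) :
    extPerm j k τ (j.succAbove t) = k.succAbove (τ t) := by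
  simp [extPerm, finSuccEquiv'_succAbove, finSuccEquiv'_symm_some]

/-- Decomposition of a permutation of `Fin (n+1)` by its value at `j`. -/
def permDecomp {n : ℕ} (j : Fin (n + 1)) :
    Fin (n + 1) × Equiv.Perm (Fin n) ≃ Equiv.Perm (Fin (n + 1)) where
  toFun p := extPerm j p.1 p.2
  invFun σ := (σ j, Equiv.removeNone ((finSuccEquiv' j).symm.trans (σ.trans (finSuccEquiv' (σ j)))))
  left_inv := by
    rintro ⟨k, τ⟩
    have h0 : extPerm j k τ j = k := extPerm_at j k τ
    refine Prod.ext h0 ?_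
    have : ((finSuccEquiv' j).symm.trans
        ((extPerm j k τ).trans (finSuccEquiv' ((extPerm j k τ) j)))) = Equiv.optionCongr τ := by
      ext x
      cases x with
      | none => simp [h0, finSuccEquiv'_symm_none, finSuccEquiv'_at]
      | some t => simp [h0, finSuccEquiv'_symm_some, finSuccEquiv'_succAbove]
    simp only [this, Equiv.removeNone_optionCongr]
  right_inv := by
    intro σ
    refine Equiv.ext fun x => ?_
    rcases eq_or_ne x j with rfl | hx
    · simp
    · obtain ⟨t, rfl⟩ := Fin.exists_succAbove_eq hx
      set e := (finSuccEquiv' j).symm.trans (σ.trans (finSuccEquiv' (σ j))) with he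
      have hne : σ (j.succAbove t) ≠ σ j := σ.injective.ne (j.succAbove_ne t)
      have he2 : e (some t) = finSuccEquiv' (σ j) (σ (j.succAbove t)) := by
        simp [he, finSuccEquiv'_symm_some]
      have hsome : ∃ u, e (some t) = some u := by
        rcases h : finSuccEquiv' (σ j) (σ (j.succAbove t)) with _ | u
        · exfalso
          apply hne
          have := h.trans (finSuccEquiv'_at (σ j)).symm
          exact (finSuccEquiv' (σ j)).injective this
        · exact ⟨u, by rw [he2, h]⟩
      have hrm := Equiv.removeNone_some e hsome
      show extPerm j (σ j) (Equiv.removeNone e) (j.succAbove t) = σ (j.succAbove t)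
      rw [extPerm_succAbove]
      calc Fin.succAbove (σ j) (Equiv.removeNone e t)
          = (finSuccEquiv' (σ j)).symm (some (Equiv.removeNone e t)) :=
            (finSuccEquiv'_symm_some _ _).symm
        _ = (finSuccEquiv' (σ j)).symm (e (some t)) := by rw [hrm]
        _ = (finSuccEquiv' (σ j)).symm (finSuccEquiv' (σ j) (σ (j.succAbove t))) := by rw [he2]
        _ = σ (j.succAbove t) := Equiv.symm_apply_apply _ _

theorem perm_expand {n : ℕ} (M : Matrix (Fin (n + 1)) (Fin (n + 1)) F) (j : Fin (n + 1)) :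
    perm F M = ∑ k, M j k * perm F (M.submatrix j.succAbove k.succAbove) := by
  rw [perm,
    ← Fintype.sum_equiv (permDecomp j) (fun p => ∏ r, M r (extPerm j p.1 p.2 r))
      (fun σ => ∏ r, M r (σ r)) (fun p => rfl)]
  rw [Fintype.sum_prod_type]
  refine Finset.sum_congr rfl fun k _ => ?_
  rw [perm, Finset.mul_sum]
  refine Finset.sum_congr rfl fun τ _ => ?_
  rw [Fin.prod_univ_succAbove (fun r => M r (extPerm j k τ r)) j]
  simp [Matrix.submatrix_apply]

variable {n : ℕ} (A : Matrix (Fin (n + 1)) (Fin (n + 1)) F)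

lemma perm_submatrix (f : Fin (n + 1) → Fin (n + 1)) :
    perm F (A.submatrix f id) = ∑ σ : Equiv.Perm (Fin (n + 1)), ∏ r, A (f r) (σ r) :=
  rfl

lemma perm_as_sum : perm F A = ∑ σ : Equiv.Perm (Fin (n + 1)), ∏ r, A r (σ r) := rfl

lemma mul_adj_apply (i j : Fin (n + 1)) :
    (A * adjSup F A) i j = perm F (A.submatrix (Function.update id j i) id) := by
  have hsub : ∀ k : Fin (n + 1),
      (A.submatrix (Function.update id j i) id).submatrix j.succAbove k.succAbove
        = A.submatrix j.succAbove k.succAbove := by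
    intro k
    have hrow : Function.update id j i ∘ j.succAbove = j.succAbove := by
      funext t
      exact Function.update_of_ne (j.succAbove_ne t) _ _
    rw [Matrix.submatrix_submatrix, hrow, Function.id_comp]
  rw [perm_expand (A.submatrix (Function.update id j i) id) j, Matrix.mul_apply]
  refine Finset.sum_congr rfl fun k _ => ?_
  rw [hsub k]
  show A i k * adjSup F A k j
      = A (Function.update id j i j) (id k) * perm F (A.submatrix j.succAbove k.succAbove)
  rw [Function.update_self]
  rfl

lemma ghost_perm_row_eq {m : ℕ} (M : Matrix (Fin m) (Fin m) F) {i j : Fin m} (hij : i ≠ j)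
    (hrow : ∀ c, M i c = M j c) : Ghost0 F (perm F M) := by
  classical
  set sw := Equiv.swap i j with hsw
  have hMsw : ∀ r c, M (sw r) c = M r c := by
    intro r c
    by_cases hri : r = i
    · rw [hri, show sw i = j from Equiv.swap_apply_left i j]
      exact (hrow c).symm
    by_cases hrj : r = j
    · rw [hrj, show sw j = i from Equiv.swap_apply_right i j]
      exact hrow c
    · rw [show sw r = r from Equiv.swap_apply_of_ne_of_ne hri hrj]
  have hT : ∀ σ : Equiv.Perm (Fin m), (∏ r, M r ((σ * sw) r)) = ∏ r, M r (σ r) := by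
    intro σ
    exact Fintype.prod_equiv sw (fun r => M r (σ (sw r))) (fun r => M r (σ r))
      (fun x => (hMsw x (σ (sw x))).symm)
  have hsplit := Finset.sum_filter_add_sum_filter_not
    (Finset.univ : Finset (Equiv.Perm (Fin m))) (fun σ => σ i < σ j)
    (fun σ => ∏ r, M r (σ r))
  have hbij : (∑ σ ∈ Finset.univ.filter fun σ : Equiv.Perm (Fin m) => ¬ σ i < σ j,
        ∏ r, M r (σ r))
      = ∑ σ ∈ Finset.univ.filter fun σ : Equiv.Perm (Fin m) => σ i < σ j,
        ∏ r, M r ((σ * sw) r) := by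
    refine Finset.sum_nbij' (fun σ => σ * sw) (fun σ => σ * sw) ?_ ?_ ?_ ?_ ?_
    · intro σ hσ
      simp only [Finset.mem_filter, Finset.mem_univ, true_and] at hσ ⊢
      have h1 : (σ * sw) i = σ j := by
        show σ (sw i) = σ j
        rw [hsw, Equiv.swap_apply_left]
      have h2 : (σ * sw) j = σ i := by
        show σ (sw j) = σ i
        rw [hsw, Equiv.swap_apply_right]
      rw [h1, h2]
      have hne : σ i ≠ σ j := σ.injective.ne hij
      exact hne.lt_or_gt.resolve_left hσ
    · intro σ hσ
      simp only [Finset.mem_filter, Finset.mem_univ, true_and] at hσ ⊢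
      have h1 : (σ * sw) i = σ j := by
        show σ (sw i) = σ j
        rw [hsw, Equiv.swap_apply_left]
      have h2 : (σ * sw) j = σ i := by
        show σ (sw j) = σ i
        rw [hsw, Equiv.swap_apply_right]
      rw [h1, h2]
      exact lt_asymm hσ
    · intro σ _
      show σ * sw * sw = σ
      rw [mul_assoc, hsw, Equiv.swap_mul_self, mul_one]
    · intro σ _
      show σ * sw * sw = σ
      rw [mul_assoc, hsw, Equiv.swap_mul_self, mul_one]
    · intro σ _
      show (∏ r, M r (σ r)) = ∏ r, M r ((σ * sw * sw) r)
      rw [mul_assoc, hsw, Equiv.swap_mul_self, mul_one]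
  have : perm F M = ∑ σ ∈ Finset.univ.filter fun σ : Equiv.Perm (Fin m) => σ i < σ j,
      nu (∏ r, M r (σ r)) := by
    rw [perm, ← hsplit, hbij, ← Finset.sum_add_distrib]
    refine Finset.sum_congr rfl fun σ _ => ?_
    rw [hT σ, add_self']
  rw [this]
  exact ghost_sum' fun σ _ => ghost_nu' _

lemma prod_pairs_eq (f1 g1 f2 g2 f3 g3 f4 g4 : Fin (n + 1) → Fin (n + 1))
    (hpq : (Finset.univ.val.map fun r => (f1 r, g1 r))
        + (Finset.univ.val.map fun r => (f2 r, g2 r))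
      = (Finset.univ.val.map fun r => (f3 r, g3 r))
        + (Finset.univ.val.map fun r => (f4 r, g4 r))) :
    (∏ r, A (f1 r) (g1 r)) * (∏ r, A (f2 r) (g2 r))
      = (∏ r, A (f3 r) (g3 r)) * (∏ r, A (f4 r) (g4 r)) := by
  have e : ∀ u v : Fin (n + 1) → Fin (n + 1),
      (∏ r, A (u r) (v r))
        = ((Finset.univ.val.map fun r => (u r, v r)).map fun p => A p.1 p.2).prod := by
    intro u v
    rw [Finset.prod_eq_multiset_prod, Multiset.map_map]
    rfl
  rw [e f1 g1, e f2 g2, e f3 g3, e f4 g4, ← Multiset.prod_add, ← Multiset.prod_add,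
    ← Multiset.map_add, ← Multiset.map_add, hpq]

lemma count_graph_id {α : Type*} [Fintype α] [DecidableEq α] (w : Equiv.Perm α) (x y : α) :
    Multiset.count (x, y) (Finset.univ.val.map fun r => (r, w r))
      = if w.symm y = x then 1 else 0 := by
  have h := count_graph (id : α → α) w x y
  simp only [id_eq] at h
  exact h

lemma term_le (i j k : Fin (n + 1)) :
    leN (perm F (A.submatrix (Function.update id k i) id)
        * perm F (A.submatrix (Function.update id j k) id))
      (perm F A * perm F (A.submatrix (Function.update id j i) id)) := by
  rw [perm_submatrix A (Function.update id k i), perm_submatrix A (Function.update id j k),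
    Finset.sum_mul_sum]
  refine sum_leN fun σ _ => ?_
  refine sum_leN fun τ _ => ?_
  obtain ⟨π, ρ, hpq⟩ := key_pairs i j k σ τ
  have hprod := prod_pairs_eq A _ _ _ _ _ _ _ _ hpq
  rw [← hprod]
  refine leN_mul_mul ?_ ?_
  · rw [perm_as_sum]
    exact leN_sum_mem (fun σ : Equiv.Perm (Fin (n + 1)) => ∏ r, A r (σ r)) (Finset.mem_univ π)
  · rw [perm_submatrix]
    exact leN_sum_mem (fun σ : Equiv.Perm (Fin (n + 1)) =>
      ∏ r, A (Function.update id j i r) (σ r)) (Finset.mem_univ ρ)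

lemma ghost_offdiag {i j : Fin (n + 1)} (hij : i ≠ j) :
    Ghost0 F (perm F (A.submatrix (Function.update id j i) id)) := by
  refine ghost_perm_row_eq (A.submatrix (Function.update id j i) id) hij fun c => ?_
  show A (Function.update id j i i) c = A (Function.update id j i j) c
  rw [Function.update_self, Function.update_of_ne hij]
  rfl

lemma diag_strict (hA : Tangible F (perm F A)) {d : F} (hd : perm F A * d = 1)
    {i k : Fin (n + 1)} (hki : k ≠ i) :
    nu (perm F (A.submatrix (Function.update id k i) id)
        * perm F (A.submatrix (Function.update id i k) id))
      ≠ nu (perm F A * perm F A) := by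
  intro heq
  have hexp : nu (perm F (A.submatrix (Function.update id k i) id)
      * perm F (A.submatrix (Function.update id i k) id))
      = ∑ σ : Equiv.Perm (Fin (n + 1)), ∑ τ : Equiv.Perm (Fin (n + 1)),
          nu ((∏ r, A (Function.update id k i r) (σ r))
            * ∏ r, A (Function.update id i k r) (τ r)) := by
    rw [perm_submatrix, perm_submatrix, Finset.sum_mul_sum, nu_sum']
    exact Finset.sum_congr rfl fun σ _ => nu_sum' _ _
  obtain ⟨σ0, -, h1⟩ := sum_attain
    (f := fun σ : Equiv.Perm (Fin (n + 1)) => ∑ τ : Equiv.Perm (Fin (n + 1)),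
      nu ((∏ r, A (Function.update id k i r) (σ r)) * ∏ r, A (Function.update id i k r) (τ r)))
    (fun σ _ => ghost_sum' fun τ _ => ghost_nu' _) Finset.univ_nonempty
  obtain ⟨τ0, -, h2⟩ := sum_attain
    (f := fun τ : Equiv.Perm (Fin (n + 1)) =>
      nu ((∏ r, A (Function.update id k i r) (σ0 r)) * ∏ r, A (Function.update id i k r) (τ r)))
    (fun τ _ => ghost_nu' _) Finset.univ_nonempty
  have hν : nu ((∏ r, A (Function.update id k i r) (σ0 r))
      * ∏ r, A (Function.update id i k r) (τ0 r)) = nu (perm F A * perm F A) := by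
    rw [← h2, ← h1, ← hexp, heq]
  obtain ⟨π, ρ, hpq⟩ := key_pairs i i k σ0 τ0
  have hprod := prod_pairs_eq A _ _ _ _ _ _ _ _ hpq
  have hρid : (∏ r, A (Function.update id i i r) (ρ r)) = ∏ r, A r (ρ r) := by
    refine Finset.prod_congr rfl fun r _ => ?_
    congr 1
    by_cases hri : r = i
    · rw [hri, Function.update_self]
    · rw [Function.update_of_ne hri]
      rfl
  have hleπ : leN (∏ r, A r (π r)) (perm F A) := by
    rw [perm_as_sum]
    exact leN_sum_mem (fun σ : Equiv.Perm (Fin (n + 1)) => ∏ r, A r (σ r)) (Finset.mem_univ π)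
  have hleρ : leN (∏ r, A r (ρ r)) (perm F A) := by
    rw [perm_as_sum]
    exact leN_sum_mem (fun σ : Equiv.Perm (Fin (n + 1)) => ∏ r, A r (σ r)) (Finset.mem_univ ρ)
  have hab : nu (∏ r, A r (π r)) * nu (∏ r, A r (ρ r)) = nu (perm F A) * nu (perm F A) := by
    calc nu (∏ r, A r (π r)) * nu (∏ r, A r (ρ r))
        = nu ((∏ r, A r (π r)) * ∏ r, A r (ρ r)) := (nu_mul _ _).symm
      _ = nu ((∏ r, A r (π r)) * ∏ r, A (Function.update id i i r) (ρ r)) := by rw [hρid]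
      _ = nu ((∏ r, A (Function.update id k i r) (σ0 r))
            * ∏ r, A (Function.update id i k r) (τ0 r)) := by rw [hprod]
      _ = nu (perm F A * perm F A) := hν
      _ = nu (perm F A) * nu (perm F A) := nu_mul _ _
  have ha : nu (∏ r, A r (π r)) + nu (perm F A) = nu (perm F A) := hleπ
  have hb : nu (∏ r, A r (ρ r)) + nu (perm F A) = nu (perm F A) := hleρ
  have hPb : nu (perm F A) * nu (∏ r, A r (ρ r)) = nu (perm F A) * nu (perm F A) := by
    have e1 : nu (perm F A) * nu (∏ r, A r (ρ r))
        = nu (perm F A) * nu (perm F A) + nu (perm F A) * nu (∏ r, A r (ρ r)) := by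
      calc nu (perm F A) * nu (∏ r, A r (ρ r))
          = (nu (∏ r, A r (π r)) + nu (perm F A)) * nu (∏ r, A r (ρ r)) := by rw [ha]
        _ = nu (∏ r, A r (π r)) * nu (∏ r, A r (ρ r))
            + nu (perm F A) * nu (∏ r, A r (ρ r)) := add_mul _ _ _
        _ = nu (perm F A) * nu (perm F A) + nu (perm F A) * nu (∏ r, A r (ρ r)) := by rw [hab]
    have e2 : nu (perm F A) * nu (∏ r, A r (ρ r)) + nu (perm F A) * nu (perm F A)
        = nu (perm F A) * nu (perm F A) := by
      calc nu (perm F A) * nu (∏ r, A r (ρ r)) + nu (perm F A) * nu (perm F A)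
          = nu (perm F A) * (nu (∏ r, A r (ρ r)) + nu (perm F A)) := (mul_add _ _ _).symm
        _ = nu (perm F A) * nu (perm F A) := by rw [hb]
    calc nu (perm F A) * nu (∏ r, A r (ρ r))
        = nu (perm F A) * nu (perm F A) + nu (perm F A) * nu (∏ r, A r (ρ r)) := e1
      _ = nu (perm F A) * nu (∏ r, A r (ρ r)) + nu (perm F A) * nu (perm F A) := add_comm _ _
      _ = nu (perm F A) * nu (perm F A) := e2
  have hPa : nu (perm F A) * nu (∏ r, A r (π r)) = nu (perm F A) * nu (perm F A) := by
    have e1 : nu (perm F A) * nu (∏ r, A r (π r))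
        = nu (perm F A) * nu (perm F A) + nu (perm F A) * nu (∏ r, A r (π r)) := by
      calc nu (perm F A) * nu (∏ r, A r (π r))
          = (nu (∏ r, A r (ρ r)) + nu (perm F A)) * nu (∏ r, A r (π r)) := by rw [hb]
        _ = nu (∏ r, A r (ρ r)) * nu (∏ r, A r (π r))
            + nu (perm F A) * nu (∏ r, A r (π r)) := add_mul _ _ _
        _ = nu (perm F A) * nu (perm F A) + nu (perm F A) * nu (∏ r, A r (π r)) := by
            rw [mul_comm (nu (∏ r, A r (ρ r))) (nu (∏ r, A r (π r))), hab]
    have e2 : nu (perm F A) * nu (∏ r, A r (π r)) + nu (perm F A) * nu (perm F A)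
        = nu (perm F A) * nu (perm F A) := by
      calc nu (perm F A) * nu (∏ r, A r (π r)) + nu (perm F A) * nu (perm F A)
          = nu (perm F A) * (nu (∏ r, A r (π r)) + nu (perm F A)) := (mul_add _ _ _).symm
        _ = nu (perm F A) * nu (perm F A) := by rw [ha]
    calc nu (perm F A) * nu (∏ r, A r (π r))
        = nu (perm F A) * nu (perm F A) + nu (perm F A) * nu (∏ r, A r (π r)) := e1
      _ = nu (perm F A) * nu (∏ r, A r (π r)) + nu (perm F A) * nu (perm F A) := add_comm _ _
      _ = nu (perm F A) * nu (perm F A) := e2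
  have hcancel : ∀ x : F, nu (perm F A) * nu x = nu (perm F A) * nu (perm F A) → nu x = nu (perm F A) := by
    intro x hx
    have h3 := congrArg (fun y => nu d * y) hx
    have h4 : nu d * nu (perm F A) = nu 1 := by
      rw [← nu_mul, mul_comm, hd]
    rw [← mul_assoc, ← mul_assoc, h4, nu_one_mul', nu_one_mul'] at h3
    exact h3
  have haP : nu (∏ r, A r (π r)) = nu (perm F A) := hcancel _ hPa
  have hbP : nu (∏ r, A r (ρ r)) = nu (perm F A) := hcancel _ hPb
  by_cases hπρ : π = ρ
  · subst hπρ
    have hcnt := congrArg (Multiset.count ((i : Fin (n + 1)), σ0 i)) hpq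
    rw [Multiset.count_add, Multiset.count_add] at hcnt
    have hc1 := count_graph_id π i (σ0 i)
    have hc2 := count_graph (Function.update id i i) π i (σ0 i)
    have hc3 := count_graph (Function.update id k i) σ0 i (σ0 i)
    have hc4 := count_graph (Function.update id i k) τ0 i (σ0 i)
    have hc2' : Function.update (id : Fin (n + 1) → Fin (n + 1)) i i (π.symm (σ0 i))
        = π.symm (σ0 i) := by
      by_cases hz : π.symm (σ0 i) = i
      · rw [hz, Function.update_self]
      · rw [Function.update_of_ne hz]
        rfl
    rw [hc2'] at hc2
    rw [Equiv.symm_apply_apply] at hc3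
    rw [Function.update_of_ne (fun h => hki h.symm)] at hc3
    simp only [id_eq, if_pos rfl] at hc3
    have hfalse : Function.update id i k (τ0.symm (σ0 i)) ≠ i := by
      by_cases hz : τ0.symm (σ0 i) = i
      · rw [hz, Function.update_self]
        exact hki
      · rw [Function.update_of_ne hz]
        exact hz
    rw [if_neg hfalse] at hc4
    rw [hc1, hc2, hc3, hc4] at hcnt
    split_ifs at hcnt <;> omega
  · have hρπ : ρ ∈ (Finset.univ : Finset (Equiv.Perm (Fin (n + 1)))).erase π :=
      Finset.mem_erase.mpr ⟨fun h => hπρ h.symm, Finset.mem_univ ρ⟩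
    have hsum1 : perm F A
        = (∏ r, A r (π r)) + ∑ σ ∈ Finset.univ.erase π, ∏ r, A r (σ r) := by
      rw [perm_as_sum]
      exact (Finset.add_sum_erase _ _ (Finset.mem_univ π)).symm
    have hsum2 : (∑ σ ∈ Finset.univ.erase π, ∏ r, A r (σ r))
        = (∏ r, A r (ρ r)) + ∑ σ ∈ (Finset.univ.erase π).erase ρ, ∏ r, A r (σ r) :=
      (Finset.add_sum_erase _ _ hρπ).symm
    have hTT : (∏ r, A r (π r)) + (∏ r, A r (ρ r)) = nu (∏ r, A r (π r)) :=
      add_eq_nu _ _ (haP.trans hbP.symm)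
    have habs : ∀ σ' ∈ (Finset.univ.erase π).erase ρ,
        nu (∏ r, A r (π r)) + (∏ r, A r (σ' r)) = nu (∏ r, A r (π r)) := by
      intro σ' _
      refine ghost_add_eq (ghost_nu' _) ?_
      have h5 : leN (∏ r, A r (σ' r)) (perm F A) := by
        rw [perm_as_sum]
        exact leN_sum_mem (fun σ : Equiv.Perm (Fin (n + 1)) => ∏ r, A r (σ r))
          (Finset.mem_univ σ')
      show leN (∏ r, A r (σ' r)) (nu (∏ r, A r (π r)))
      rw [leN, nu_idem, haP]
      exact h5
    have hfin : perm F A = nu (∏ r, A r (π r)) := by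
      rw [hsum1, hsum2, ← add_assoc, hTT]
      exact absorb_sum habs
    apply hA
    rw [hfin, nu_idem]

lemma central (hA : Tangible F (perm F A)) {d : F} (hd : perm F A * d = 1) (i j : Fin (n + 1)) :
    (∑ k, perm F (A.submatrix (Function.update id k i) id)
        * perm F (A.submatrix (Function.update id j k) id))
      = perm F A * perm F (A.submatrix (Function.update id j i) id) := by
  have hQii : perm F (A.submatrix (Function.update id i i) id) = perm F A := by
    have hupd : Function.update (id : Fin (n + 1) → Fin (n + 1)) i i = id := by
      funext z
      by_cases hz : z = i
      · rw [hz, Function.update_self]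
        rfl
      · rw [Function.update_of_ne hz]
    rw [hupd, Matrix.submatrix_id_id]
  rw [← Finset.add_sum_erase Finset.univ _ (Finset.mem_univ i), hQii]
  have habs : ∀ k ∈ Finset.univ.erase i,
      perm F A * perm F (A.submatrix (Function.update id j i) id)
        + perm F (A.submatrix (Function.update id k i) id)
          * perm F (A.submatrix (Function.update id j k) id)
      = perm F A * perm F (A.submatrix (Function.update id j i) id) := by
    intro k hk
    have hki : k ≠ i := (Finset.mem_erase.mp hk).1
    by_cases hij : i = j
    · subst hij
      refine lt_add_eq (term_le A i i k) ?_
      rw [hQii]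
      exact fun h => diag_strict A hA hd hki h.symm
    · exact ghost_add_eq (ghost_mul' _ (ghost_offdiag A hij)) (term_le A i j k)
  exact absorb_sum habs

lemma I_sq (hA : Tangible F (perm F A)) {d : F} (hd : perm F A * d = 1) :
    (d • (A * adjSup F A)) * (d • (A * adjSup F A)) = d • (A * adjSup F A) := by
  ext i j
  rw [Matrix.mul_apply]
  simp only [Matrix.smul_apply, smul_eq_mul]
  have hterm : ∀ k, (d * (A * adjSup F A) i k) * (d * (A * adjSup F A) k j)
      = d * (d * ((A * adjSup F A) i k * (A * adjSup F A) k j)) := fun k => by ring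
  rw [Finset.sum_congr rfl fun k _ => hterm k, ← Finset.mul_sum, ← Finset.mul_sum]
  simp only [mul_adj_apply]
  rw [central A hA hd i j]
  rw [show d * (d * (perm F A * perm F (A.submatrix (Function.update id j i) id)))
      = (perm F A * d) * (d * perm F (A.submatrix (Function.update id j i) id)) from by ring,
    hd, one_mul]

end Supertropical


open Supertropical in
/-- For a nonsingular square matrix `A` over a supertropical
semifield (with `d = |A|⁻¹`, `A^∇ = d • adj(A)`, `I_A = A A^∇`, `Ā = I_A A`),
one has `Ā A^∇ I_A = I_A` and `I_A Ā = Ā`. -/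
theorem stmt3 {F : Type*} [SupertropicalSemifield F] {n : ℕ}
    (A : Matrix (Fin (n + 1)) (Fin (n + 1)) F)
    (hA : Tangible F (perm F A))
    (d : F) (hd : perm F A * d = 1) :
    (((A * (d • adjSup F A)) * A) * (d • adjSup F A) * (A * (d • adjSup F A)) =
        A * (d • adjSup F A)) ∧
      (A * (d • adjSup F A)) * ((A * (d • adjSup F A)) * A) =
        (A * (d • adjSup F A)) * A := by
  have hsmul : A * (d • adjSup F A) = d • (A * adjSup F A) := Matrix.mul_smul A d (adjSup F A)
  have hII : (A * (d • adjSup F A)) * (A * (d • adjSup F A)) = A * (d • adjSup F A) := by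
    rw [hsmul]
    exact I_sq A hA hd
  constructor
  · rw [Matrix.mul_assoc (A * (d • adjSup F A)) A (d • adjSup F A), hII, hII]
  · rw [← Matrix.mul_assoc, hII]
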